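/- With notation as above (K invertible, P(v)⁽ⁿ⁾ = v⁽ⁿ⁾ − (K⁻¹ Σₘ x⁽ᵐ⁾ × v⁽ᵐ⁾) × x⁽ⁿ⁾), the map P : (ℝ³)ᴺ → (ℝ³)ᴺ is linear and idempotent: P(P(v)) = P(v) for all v. -/

import Mathlib

open Matrix

lemma sum_mulVec_aux {n : ℕ} (s : Finset (Fin n)) (A : Fin n → Matrix (Fin 3) (Fin 3) ℝ)
    (ω : Fin 3 → ℝ) : (∑ i ∈ s, A i) *ᵥ ω = ∑ i ∈ s, A i *ᵥ ω := by
  funext j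
  simp [Matrix.mulVec, dotProduct, Matrix.sum_apply, Finset.sum_mul]
  rw [Finset.sum_comm]

lemma cross3_aux (a ω : Fin 3 → ℝ) :
    crossProduct a (crossProduct ω a) = (a ⬝ᵥ a) • ω - (a ⬝ᵥ ω) • a := by
  funext i
  fin_cases i <;>
    simp [crossProduct, dotProduct, Fin.sum_univ_three] <;> ring

lemma vecMulVec_mulVec_aux (a ω : Fin 3 → ℝ) :
    (vecMulVec a a).mulVec ω = (a ⬝ᵥ ω) • a := by
  funext i
  simp [vecMulVec, mulVec, dotProduct, Finset.mul_sum, Finset.sum_mul, mul_comm, mul_left_comm]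

theorem stmt7 (N : ℕ) (x : Fin N → Fin 3 → ℝ)
    (K : Matrix (Fin 3) (Fin 3) ℝ)
    (hK : K = (∑ n, x n ⬝ᵥ x n) • (1 : Matrix (Fin 3) (Fin 3) ℝ)
            - ∑ n, vecMulVec (x n) (x n))
    (hKinv : IsUnit K.det)
    (P : (Fin N → Fin 3 → ℝ) → (Fin N → Fin 3 → ℝ))
    (hP : ∀ v n, P v n = v n
        - crossProduct (K⁻¹.mulVec (∑ m, crossProduct (x m) (v m))) (x n)) :
    (∀ (c : ℝ) (v w : Fin N → Fin 3 → ℝ), P (c • v + w) = c • P v + P w) ∧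
    (∀ v, P (P v) = P v) := by
  -- key identity: ∑ n, x n × (ω × x n) = K.mulVec ω
  have key : ∀ ω : Fin 3 → ℝ,
      (∑ n, crossProduct (x n) (crossProduct ω (x n))) = K.mulVec ω := by
    intro ω
    rw [hK]
    rw [sub_mulVec]
    have h1 : ((∑ n, x n ⬝ᵥ x n) • (1 : Matrix (Fin 3) (Fin 3) ℝ)).mulVec ω
        = ∑ n, (x n ⬝ᵥ x n) • ω := by
      rw [smul_mulVec, one_mulVec, Finset.sum_smul]
    have h2 : (∑ n, vecMulVec (x n) (x n)).mulVec ω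
        = ∑ n, (x n ⬝ᵥ ω) • x n := by
      rw [sum_mulVec_aux]
      exact Finset.sum_congr rfl fun n _ => vecMulVec_mulVec_aux _ _
    rw [h1, h2, ← Finset.sum_sub_distrib]
    exact Finset.sum_congr rfl fun n _ => cross3_aux _ _
  constructor
  · intro c v w
    funext n
    have hsum : (∑ m, crossProduct (x m) ((c • v + w) m))
        = c • (∑ m, crossProduct (x m) (v m)) + ∑ m, crossProduct (x m) (w m) := by
      rw [Finset.smul_sum, ← Finset.sum_add_distrib]
      refine Finset.sum_congr rfl fun m _ => ?_
      simp only [Pi.add_apply, Pi.smul_apply, map_add, _root_.map_smul]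
    rw [hP, hsum]
    simp only [Pi.add_apply, Pi.smul_apply, hP]
    rw [mulVec_add, mulVec_smul, map_add, _root_.map_smul]
    simp only [LinearMap.add_apply, LinearMap.smul_apply, Pi.smul_apply, Pi.add_apply]
    module
  · intro v
    funext n
    set s := ∑ m, crossProduct (x m) (v m) with hs
    set ω := K⁻¹.mulVec s with hω
    have hzero : (∑ m, crossProduct (x m) (P v m)) = 0 := by
      have : ∀ m, crossProduct (x m) (P v m)
          = crossProduct (x m) (v m) - crossProduct (x m) (crossProduct ω (x m)) := by
        intro m
        rw [hP]
        simp [map_sub]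
        rfl
      rw [Finset.sum_congr rfl fun m _ => this m, Finset.sum_sub_distrib, key, hω,
        Matrix.mulVec_mulVec, Matrix.mul_nonsing_inv K hKinv, Matrix.one_mulVec, ← hs,
        sub_self]
    rw [hP, hzero]
    simp
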